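/- If an LP allocates w = sqrt(f*Vol*TVL/r_s) - TVL to a pool with current TVL and fee income f*Vol, then the resulting return of the pool after this allocation equals f*Vol/(TVL + w) = sqrt(r(0)) * sqrt(r_s), where r(0) = f*Vol/TVL. In particular, the post-allocation return is the geometric mean of the pre-allocation return and the staking rate, and is independent of W. -/

import Mathlib

/-- After allocating `w = √(f*Vol*TVL/rs) - TVL`, the pool return
`f*Vol/(TVL+w)` equals `√(r(0)) * √(rs)`, the geometric mean of the
pre-allocation return `r(0) = f*Vol/TVL` and the staking rate. -/
theorem stmt_5 (f Vol TVL rs : ℝ) (hf : 0 < f) (hVol : 0 < Vol)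
    (hTVL : 0 < TVL) (hrs : 0 < rs) (hge : rs ≤ f * Vol / TVL)
    (w : ℝ) (hw : w = Real.sqrt (f * Vol * TVL / rs) - TVL) :
    f * Vol / (TVL + w) = Real.sqrt (f * Vol / TVL) * Real.sqrt rs := by
  have hfv : 0 < f * Vol := mul_pos hf hVol
  have harg : 0 < f * Vol * TVL / rs := by positivity
  have hS : 0 < Real.sqrt (f * Vol * TVL / rs) := Real.sqrt_pos.mpr harg
  have hTw : TVL + w = Real.sqrt (f * Vol * TVL / rs) := by rw [hw]; ring
  rw [hTw, div_eq_iff (ne_of_gt hS), ← Real.sqrt_mul (by positivity), mul_assoc,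
    ← Real.sqrt_mul (by positivity)]
  rw [show f * Vol / TVL * rs * (f * (Vol * TVL) / rs) = (f * Vol) ^ 2 by
    field_simp, Real.sqrt_sq hfv.le]
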